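/- Let N ≥ 1, γ ≥ 0, R > 0, T > 0, and let x_n : [0, T] → ℝ and q_n : [0, T] → ℝ, n = 1,…,N, be differentiable functions satisfying the agent-based contagion system q_n′(t) = γ·max{q_n*(t) − q_n(t), 0} with q_n*(t) = (∑_{m=1}^N κ(|x_n(t) − x_m(t)|)·q_m(t))/(∑_{m=1}^N κ(|x_n(t) − x_m(t)|)) and κ(r) = R/((r² + R²)·π). If q_n(0) ∈ [0,1] for every n, then q_n(t) ∈ [0,1] for every n and every t ∈ [0, T]. Moreover, if q_n(0) = 1 for some n, then q_n(t) = 1 for all t ∈ [0, T]. -/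

import Mathlib

/-- In the agent-based contagion system
`q_n′ = γ max{q_n* - q_n, 0}` with kernel-weighted averages `q_n*`, exposures that
start in `[0,1]` stay in `[0,1]`, and spreading individuals (`q_n(0) = 1`) keep
`q_n(t) = 1` for all times. -/
theorem contagion_system_invariance
    (N : ℕ) (hN : 0 < N) (γ R T : ℝ) (hγ : 0 ≤ γ) (hR : 0 < R) (hT : 0 < T)
    (x q : Fin N → ℝ → ℝ)
    (κ : ℝ → ℝ) (hκ : ∀ r : ℝ, κ r = R / ((r ^ 2 + R ^ 2) * Real.pi))
    (qstar : Fin N → ℝ → ℝ)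
    (hqstar : ∀ (n : Fin N) (t : ℝ),
      qstar n t = (∑ m : Fin N, κ (|x n t - x m t|) * q m t)
                    / (∑ m : Fin N, κ (|x n t - x m t|)))
    (hx : ∀ n : Fin N, ∀ t ∈ Set.Icc (0:ℝ) T,
      DifferentiableWithinAt ℝ (x n) (Set.Icc (0:ℝ) T) t)
    (hq : ∀ n : Fin N, ∀ t ∈ Set.Icc (0:ℝ) T,
      HasDerivWithinAt (q n) (γ * max (qstar n t - q n t) 0) (Set.Icc (0:ℝ) T) t)
    (h0 : ∀ n : Fin N, q n 0 ∈ Set.Icc (0:ℝ) 1) :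
    (∀ n : Fin N, ∀ t ∈ Set.Icc (0:ℝ) T, q n t ∈ Set.Icc (0:ℝ) 1) ∧
    (∀ n : Fin N, q n 0 = 1 → ∀ t ∈ Set.Icc (0:ℝ) T, q n t = 1) := by
  haveI : Nonempty (Fin N) := ⟨⟨0, hN⟩⟩
  have h0T : (0:ℝ) ∈ Set.Icc (0:ℝ) T := ⟨le_refl 0, hT.le⟩
  -- continuity of each q n on [0, T]
  have hqc : ∀ n : Fin N, ContinuousOn (q n) (Set.Icc (0:ℝ) T) :=
    fun n t ht => (hq n t ht).continuousWithinAt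
  -- positivity of the kernel
  have hκpos : ∀ r : ℝ, 0 < κ r := by
    intro r
    rw [hκ]
    have hπ := Real.pi_pos
    positivity
  -- each q n is nondecreasing on [0, T]
  have hmono : ∀ n : Fin N, MonotoneOn (q n) (Set.Icc (0:ℝ) T) := by
    intro n
    refine monotoneOn_of_hasDerivWithinAt_nonneg (f' := fun t => γ * max (qstar n t - q n t) 0)
      (convex_Icc 0 T) (hqc n) ?_ ?_
    · intro t ht
      rw [interior_Icc] at ht ⊢
      exact (hq n t (Set.Ioo_subset_Icc_self ht)).mono Set.Ioo_subset_Icc_self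
    · intro t _
      exact mul_nonneg hγ (le_max_right _ _)
  -- key upper bound with a moving barrier
  have key : ∀ ε : ℝ, 0 < ε → ∀ t ∈ Set.Icc (0:ℝ) T, ∀ n : Fin N, q n t < 1 + ε * (1 + t) := by
    intro ε hε
    by_contra hcon
    push_neg at hcon
    obtain ⟨t1, ht1, n1, hn1⟩ := hcon
    set S : Set ℝ := ⋃ n : Fin N,
      (Set.Icc (0:ℝ) T ∩ (fun t => q n t - (1 + ε * (1 + t))) ⁻¹' Set.Ici 0) with hSdef
    have hmemS : ∀ t : ℝ, t ∈ S ↔ t ∈ Set.Icc (0:ℝ) T ∧ ∃ n : Fin N, 1 + ε * (1 + t) ≤ q n t := by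
      intro t
      simp only [hSdef, Set.mem_iUnion, Set.mem_inter_iff, Set.mem_preimage, Set.mem_Ici,
        sub_nonneg]
      constructor
      · rintro ⟨n, ht, hn⟩; exact ⟨ht, n, hn⟩
      · rintro ⟨ht, n, hn⟩; exact ⟨n, ht, hn⟩
    have hSclosed : IsClosed S := by
      refine isClosed_iUnion_of_finite fun n => ?_
      refine ContinuousOn.preimage_isClosed_of_isClosed ?_ isClosed_Icc isClosed_Ici
      exact (hqc n).sub ((continuous_const.add
        (continuous_const.mul (continuous_const.add continuous_id))).continuousOn)
    have hSne : S.Nonempty := ⟨t1, (hmemS t1).2 ⟨ht1, n1, hn1⟩⟩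
    have hSbdd : BddBelow S := ⟨0, fun t ht => ((hmemS t).1 ht).1.1⟩
    set t0 : ℝ := sInf S with ht0def
    have ht0S : t0 ∈ S := hSclosed.csInf_mem hSne hSbdd
    obtain ⟨ht0Icc, n, hn⟩ := (hmemS t0).1 ht0S
    have ht0pos : 0 < t0 := by
      rcases lt_or_eq_of_le ht0Icc.1 with h | h
      · exact h
      · exfalso
        rw [← h] at hn
        have := (h0 n).2
        nlinarith
    -- strictly below the barrier before t0
    have hbefore : ∀ t ∈ Set.Ico (0:ℝ) t0, ∀ m : Fin N, q m t < 1 + ε * (1 + t) := by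
      intro t ht m
      by_contra hle
      push_neg at hle
      have htIcc : t ∈ Set.Icc (0:ℝ) T := ⟨ht.1, le_trans ht.2.le ht0Icc.2⟩
      exact notMem_of_lt_csInf ht.2 hSbdd ((hmemS t).2 ⟨htIcc, m, hle⟩)
    -- at t0 every q m is at most the barrier, by continuity from the left
    have hIcoIcc : Set.Ico (0:ℝ) t0 ⊆ Set.Icc (0:ℝ) T :=
      fun t ht => ⟨ht.1, le_trans ht.2.le ht0Icc.2⟩
    have hclos : t0 ∈ closure (Set.Ico (0:ℝ) t0) := by
      rw [closure_Ico ht0pos.ne]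
      exact ⟨ht0pos.le, le_refl t0⟩
    haveI hnebot : (nhdsWithin t0 (Set.Ico (0:ℝ) t0)).NeBot :=
      mem_closure_iff_nhdsWithin_neBot.mp hclos
    have hat_t0 : ∀ m : Fin N, q m t0 ≤ 1 + ε * (1 + t0) := by
      intro m
      have hc : ContinuousWithinAt (fun t => q m t - ε * (1 + t)) (Set.Ico 0 t0) t0 := by
        refine ContinuousWithinAt.sub ?_ ?_
        · exact ((hqc m t0 ht0Icc).mono hIcoIcc)
        · exact ((continuous_const.mul (continuous_const.add continuous_id)).continuousAt
            ).continuousWithinAt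
      have hev : ∀ᶠ t in nhdsWithin t0 (Set.Ico (0:ℝ) t0),
          (fun t => q m t - ε * (1 + t)) t ≤ 1 := by
        filter_upwards [self_mem_nhdsWithin] with t ht
        have := hbefore t ht m
        linarith
      have h2 : q m t0 - ε * (1 + t0) ≤ 1 := le_of_tendsto hc hev
      linarith
    -- the weighted average is at most q n t0
    have hmax : ∀ m : Fin N, q m t0 ≤ q n t0 := fun m => le_trans (hat_t0 m) hn
    have hstar : qstar n t0 ≤ q n t0 := by
      rw [hqstar]
      set w : Fin N → ℝ := fun m => κ (|x n t0 - x m t0|) with hwdef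
      have hwpos : ∀ m, 0 < w m := fun m => hκpos _
      have hsumpos : 0 < ∑ m : Fin N, w m :=
        Finset.sum_pos (fun m _ => hwpos m) Finset.univ_nonempty
      rw [div_le_iff₀ hsumpos]
      calc ∑ m : Fin N, w m * q m t0 ≤ ∑ m : Fin N, w m * q n t0 :=
            Finset.sum_le_sum (fun m _ => mul_le_mul_of_nonneg_left (hmax m) (hwpos m).le)
        _ = q n t0 * ∑ m : Fin N, w m := by rw [← Finset.sum_mul, mul_comm]
    -- hence q n has derivative 0 at t0
    have hd0 : HasDerivWithinAt (q n) 0 (Set.Icc (0:ℝ) T) t0 := by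
      have := hq n t0 ht0Icc
      rwa [max_eq_right (sub_nonpos.mpr hstar), mul_zero] at this
    -- the barrier function has derivative ε
    have hline : HasDerivAt (fun t : ℝ => 1 + ε * (1 + t)) ε t0 := by
      have h1 : HasDerivAt (fun t : ℝ => 1 + t) 1 t0 := (hasDerivAt_id t0).const_add (1:ℝ)
      have h2 := (h1.const_mul ε).const_add (1:ℝ)
      simpa using h2
    -- difference g has negative derivative at t0 within [0, t0]
    set g : ℝ → ℝ := fun t => q n t - (1 + ε * (1 + t)) with hgdef
    have hIccsub : Set.Icc (0:ℝ) t0 ⊆ Set.Icc (0:ℝ) T :=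
      Set.Icc_subset_Icc_right ht0Icc.2
    have hg : HasDerivWithinAt g (-ε) (Set.Icc (0:ℝ) t0) t0 := by
      have := (hd0.sub hline.hasDerivWithinAt).mono hIccsub
      rw [zero_sub] at this
      exact this
    -- slope contradiction
    rw [hasDerivWithinAt_iff_tendsto_slope] at hg
    have hsetEq : Set.Icc (0:ℝ) t0 \ {t0} = Set.Ico (0:ℝ) t0 := by
      ext t
      simp only [Set.mem_diff, Set.mem_Icc, Set.mem_singleton_iff, Set.mem_Ico]
      constructor
      · rintro ⟨⟨h1, h2⟩, h3⟩; exact ⟨h1, lt_of_le_of_ne h2 h3⟩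
      · rintro ⟨h1, h2⟩; exact ⟨⟨h1, h2.le⟩, h2.ne⟩
    rw [hsetEq] at hg
    have hev : ∀ᶠ t in nhdsWithin t0 (Set.Ico (0:ℝ) t0), 0 ≤ slope g t0 t := by
      filter_upwards [self_mem_nhdsWithin] with t ht
      have hgt : g t < 0 := by
        have := hbefore t ht n
        simp only [hgdef]
        linarith
      have hgt0 : 0 ≤ g t0 := by simp only [hgdef]; linarith
      rw [slope_def_field]
      have hnum : g t - g t0 ≤ 0 := by linarith
      have hden : t - t0 < 0 := by linarith [ht.2]
      exact div_nonneg_iff.mpr (Or.inr ⟨hnum, hden.le⟩)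
    have : (0:ℝ) ≤ -ε := ge_of_tendsto hg hev
    linarith
  -- conclude the upper bound
  have hub : ∀ n : Fin N, ∀ t ∈ Set.Icc (0:ℝ) T, q n t ≤ 1 := by
    intro n t ht
    refine le_of_forall_pos_le_add fun δ hδ => ?_
    have h1t : (0:ℝ) < 1 + t := by linarith [ht.1]
    have h1 := key (δ / (1 + t)) (div_pos hδ h1t) t ht n
    have h2 : δ / (1 + t) * (1 + t) = δ := div_mul_cancel₀ δ h1t.ne'
    linarith
  have hlb : ∀ n : Fin N, ∀ t ∈ Set.Icc (0:ℝ) T, q n 0 ≤ q n t :=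
    fun n t ht => hmono n h0T ht ht.1
  constructor
  · intro n t ht
    exact ⟨le_trans (h0 n).1 (hlb n t ht), hub n t ht⟩
  · intro n hn1 t ht
    have := hlb n t ht
    rw [hn1] at this
    exact le_antisymm (hub n t ht) this
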